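/- Dichotomy for invariant superlevel sets: let S be a compact metric space with the attracting dynamics property as above, f : S → ℕ upper semicontinuous and invariant under the acting group, m₁ = max f on S, and m₂ < m₁ such that { f ≥ m₂ } strictly contains { f ≥ m₁ }. Then either S ⊆ { f ≥ m₁ }, or { f ≥ m₁ } is a single point and S ⊆ { f ≥ m₂ }. -/

import Mathlib

open Filter Topology

/-- Dichotomy for invariant superlevel sets under attracting dynamics: either
everything has value at least m₁, or the top superlevel set is a single point
and everything has value at least m₂. -/
theorem superlevel_dichotomy_of_attracting_dynamics
    (S : Type*) [MetricSpace S] [CompactSpace S] [Nonempty S]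
    (G : Type*) [Group G] [MulAction G S]
    (hcont : ∀ γ : G, Continuous fun x : S => γ • x)
    (hdyn : ∀ q : S, ∃ g : ℕ → G, ∃ r : S,
      ∀ x : S, x ≠ r → Tendsto (fun j => g j • x) atTop (𝓝 q))
    (f : S → ℕ) (husc : UpperSemicontinuous f)
    (hinv : ∀ γ : G, ∀ x : S, f (γ • x) = f x)
    (m₁ m₂ : ℕ) (hmax : ∀ x : S, f x ≤ m₁) (hm₁ : ∃ x : S, f x = m₁)
    (hm₂ : m₂ < m₁)
    (hssub : {x : S | m₁ ≤ f x} ⊂ {x : S | m₂ ≤ f x}) :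
    (∀ x : S, m₁ ≤ f x) ∨
      ((∃ pt : S, {x : S | m₁ ≤ f x} = {pt}) ∧ ∀ x : S, m₂ ≤ f x) := by
  -- superlevel sets are closed
  have hclosed : ∀ m : ℕ, IsClosed {x : S | m ≤ f x} := by
    intro m
    rw [← isOpen_compl_iff]
    have : {x : S | m ≤ f x}ᶜ = {x : S | f x < m} := by
      ext x; simp [not_le]
    rw [this]
    rw [isOpen_iff_mem_nhds]
    intro x hx
    exact husc x m hx
  -- key lemma: a superlevel set containing two distinct points is everything
  have key : ∀ m : ℕ, ∀ a b : S, a ≠ b → m ≤ f a → m ≤ f b → ∀ q : S, m ≤ f q := by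
    intro m a b hab ha hb q
    obtain ⟨g, r, hg⟩ := hdyn q
    obtain ⟨c, hc, hcr⟩ : ∃ c : S, m ≤ f c ∧ c ≠ r := by
      by_cases har : a = r
      · exact ⟨b, hb, fun h => hab (har.trans h.symm)⟩
      · exact ⟨a, ha, har⟩
    have htend := hg c hcr
    have hmem : ∀ j : ℕ, (fun j => g j • c) j ∈ {x : S | m ≤ f x} := by
      intro j; simp only [Set.mem_setOf_eq, hinv]; exact hc
    exact (hclosed m).mem_of_tendsto htend (Eventually.of_forall hmem)
  obtain ⟨a, ha⟩ := hm₁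
  by_cases htwo : ∃ b : S, b ≠ a ∧ m₁ ≤ f b
  · obtain ⟨b, hba, hb⟩ := htwo
    exact Or.inl (key m₁ b a hba hb ha.ge)
  · right
    push_neg at htwo
    constructor
    · refine ⟨a, ?_⟩
      ext x
      simp only [Set.mem_setOf_eq, Set.mem_singleton_iff]
      constructor
      · intro hx
        by_contra hxa
        exact absurd hx (by simpa using htwo x hxa)
      · intro hx; subst hx; exact ha.ge
    · obtain ⟨b, hbB, hbA⟩ := Set.exists_of_ssubset hssub
      have hba : b ≠ a := by
        intro h; subst h; exact hbA (by simp [Set.mem_setOf_eq, ha.ge])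
      exact key m₂ b a hba hbB (hm₂.le.trans ha.ge)
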